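/- Let i_s and i_e be composable input-enabled transition systems (IOTSs), i_s' ∈ Q_{i_s}, i_e' ∈ Q_{i_e} and σ ∈ (L_{i_s‖i_e}^δ)*. Then i_s ‖ i_e ⟹σ i_s' ‖ i_e' if and only if i_s ⟹(σ↾L_{i_s}^δ) i_s' and i_e ⟹(σ↾L_{i_e}^δ) i_e'. -/

import Mathlib

/-- Visible labels extended with the quiescence label `δ`. -/
inductive DLabel (A : Type) where
  | act : A → DLabel A
  | δ : DLabel A
deriving DecidableEq

/-- A labelled transition system with state type `S` and label type `A`.
`T p none p'` is an internal (τ) transition; `T p (some a) p'` a visible one.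
The set of states is the whole type `S`; the initial state is `q0`. -/
structure LTS (S : Type) (A : Type) where
  T : S → Option A → S → Prop
  I : Set A
  U : Set A
  q0 : S

namespace LTS

variable {S E F A : Type}

/-- The set of visible labels. -/
def L (s : LTS S A) : Set A := s.I ∪ s.U

/-- Well-formedness of an LTS: countably many states and labels, inputs and
outputs disjoint, and visible transitions labelled in `I ∪ U`. -/
def WF (s : LTS S A) : Prop :=
  Countable S ∧ s.I.Countable ∧ s.U.Countable ∧ Disjoint s.I s.U ∧
    ∀ p a q, s.T p (some a) q → a ∈ s.L

/-- A state is quiescent if it has no output transitions and no τ-transitions. -/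
def quiescent (s : LTS S A) (p : S) : Prop :=
  (∀ x ∈ s.U, ∀ p', ¬ s.T p (some x) p') ∧ (∀ p', ¬ s.T p none p')

/-- Single-step transition relation for δ-extended labels: `δ` is a self-loop
on quiescent states. -/
def dstep (s : LTS S A) (p : S) : DLabel A → S → Prop
  | .act a, p' => s.T p (some a) p'
  | .δ, p' => p = p' ∧ s.quiescent p

/-- `eps p p'`: `p'` is reachable from `p` by finitely many τ-transitions. -/
def eps (s : LTS S A) : S → S → Prop :=
  Relation.ReflTransGen (fun p q => s.T p none q)

/-- Weak transition relation `p ⟹σ p'` over δ-extended traces. -/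
def wtrans (s : LTS S A) : S → List (DLabel A) → S → Prop
  | p, [], p' => s.eps p p'
  | p, ℓ :: σ, p'' => ∃ p1 p2, s.eps p p1 ∧ s.dstep p1 ℓ p2 ∧ s.wtrans p2 σ p''

/-- The δ-extended label set `L^δ` as a set of `DLabel`s. -/
def Ld (s : LTS S A) : Set (DLabel A) := (DLabel.act '' s.L) ∪ {DLabel.δ}

/-- `Utraces s`: δ-extended traces of `s` (from the initial state) that never
pass through a state refusing a subsequent input of the trace. -/
def Utraces (s : LTS S A) : Set (List (DLabel A)) :=
  { σ | (∀ ℓ ∈ σ, ℓ ∈ s.Ld) ∧ (∃ p, s.wtrans s.q0 σ p) ∧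
      ∀ σ1 a σ2, σ = σ1 ++ DLabel.act a :: σ2 → a ∈ s.I →
        ∀ p, s.wtrans s.q0 σ1 p → ∃ p', s.wtrans p [DLabel.act a] p' }

/-- `out p`: the outputs (including quiescence δ) enabled in state `p`. -/
def out (s : LTS S A) (p : S) : Set (DLabel A) :=
  { x | match x with
        | .act a => a ∈ s.U ∧ ∃ p', s.T p (some a) p'
        | .δ => s.quiescent p }

/-- `out` of a set of states. -/
def outSet (s : LTS S A) (P : Set S) : Set (DLabel A) := ⋃ p ∈ P, s.out p

/-- `inp p`: the inputs weakly enabled in state `p`. -/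
def inp (s : LTS S A) (p : S) : Set A :=
  { a | a ∈ s.I ∧ ∃ p', s.wtrans p [DLabel.act a] p' }

/-- The states reached from the initial state after trace `σ`. -/
def after (s : LTS S A) (σ : List (DLabel A)) : Set S :=
  { p' | s.wtrans s.q0 σ p' }

/-- Input-enabledness: every input is weakly enabled in every state. -/
def IOTS (s : LTS S A) : Prop :=
  ∀ q : S, ∀ a ∈ s.I, ∃ q', s.wtrans q [DLabel.act a] q'

/-- Two LTSs are composable iff their output sets are disjoint. -/
def Composable (s : LTS S A) (e : LTS E A) : Prop := Disjoint s.U e.U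

/-- Parallel composition of two LTSs: synchronisation on shared labels,
interleaving on non-shared labels and τ. -/
def par (s : LTS S A) (e : LTS E A) : LTS (S × E) A where
  I := (s.I \ e.U) ∪ (e.I \ s.U)
  U := s.U ∪ e.U
  q0 := (s.q0, e.q0)
  T := fun x ℓ y =>
    (s.T x.1 ℓ y.1 ∧ y.2 = x.2 ∧ (ℓ = none ∨ ∃ a ∈ s.L, ℓ = some a) ∧
      ∀ a ∈ e.L, ℓ ≠ some a) ∨
    (e.T x.2 ℓ y.2 ∧ y.1 = x.1 ∧ (ℓ = none ∨ ∃ a ∈ e.L, ℓ = some a) ∧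
      ∀ a ∈ s.L, ℓ ≠ some a) ∨
    (∃ a ∈ s.L ∩ e.L, ℓ = some a ∧ s.T x.1 (some a) y.1 ∧ e.T x.2 (some a) y.2)

/-- The uioco implementation relation. -/
def uioco (i : LTS E A) (s : LTS S A) : Prop :=
  ∀ σ ∈ s.Utraces, i.outSet (i.after σ) ⊆ s.outSet (s.after σ)

/-- `s.Accepts e`: along every Utrace of `s ‖ e`, every output of `e` that is an
input label of `s` is actually accepted by `s` and is an output of `e`. -/
def Accepts (s : LTS S A) (e : LTS E A) : Prop :=
  ∀ σ ∈ (s.par e).Utraces, ∀ p q, (s.par e).wtrans (s.par e).q0 σ (p, q) →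
    ∀ a, DLabel.act a ∈ e.out q → a ∈ s.I → a ∈ s.inp p ∧ a ∈ e.U

/-- Mutual acceptance. -/
def MutuallyAccepts (s : LTS S A) (e : LTS E A) : Prop := s.Accepts e ∧ e.Accepts s

/-- Isomorphism of LTSs: equal label sets and a bijection on states preserving
the initial state and all transitions (including τ and δ). -/
def Isomorphic (s : LTS S A) (s' : LTS E A) : Prop :=
  s.I = s'.I ∧ s.U = s'.U ∧ ∃ f : S ≃ E, f s.q0 = s'.q0 ∧
    (∀ p p' ℓ, s.T p ℓ p' ↔ s'.T (f p) ℓ (f p')) ∧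
    (∀ p p', s.dstep p DLabel.δ p' ↔ s'.dstep (f p) DLabel.δ (f p'))

open Classical in
/-- Projection of a trace onto a set of labels. -/
noncomputable def proj : List (DLabel A) → Set (DLabel A) → List (DLabel A)
  | [], _ => []
  | ℓ :: σ, 𝓛 => if ℓ ∈ 𝓛 then ℓ :: proj σ 𝓛 else proj σ 𝓛

end LTS


namespace LTS

variable {S E A : Type}

lemma act_mem_Ld {s : LTS S A} {a : A} : DLabel.act a ∈ s.Ld ↔ a ∈ s.L := by
  constructor
  · rintro (⟨b, hb, heq⟩ | h)
    · cases heq; exact hb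
    · exact absurd h (by simp)
  · intro h; exact Or.inl ⟨a, h, rfl⟩

lemma delta_mem_Ld {s : LTS S A} : (DLabel.δ : DLabel A) ∈ s.Ld := Or.inr rfl

open Classical in
lemma proj_cons_mem {ℓ : DLabel A} {σ : List (DLabel A)} {𝓛 : Set (DLabel A)}
    (h : ℓ ∈ 𝓛) : proj (ℓ :: σ) 𝓛 = ℓ :: proj σ 𝓛 := by
  simp [proj, h]

open Classical in
lemma proj_cons_not_mem {ℓ : DLabel A} {σ : List (DLabel A)} {𝓛 : Set (DLabel A)}
    (h : ℓ ∉ 𝓛) : proj (ℓ :: σ) 𝓛 = proj σ 𝓛 := by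
  simp [proj, h]

lemma eps_par_left (iS : LTS S A) (iE : LTS E A) {p p' : S} (q : E)
    (h : iS.eps p p') : (iS.par iE).eps (p, q) (p', q) := by
  induction h with
  | refl => exact .refl
  | tail _ hstep ih =>
      exact ih.tail (Or.inl ⟨hstep, rfl, Or.inl rfl, by simp⟩)

lemma eps_par_right (iS : LTS S A) (iE : LTS E A) (p : S) {q q' : E}
    (h : iE.eps q q') : (iS.par iE).eps (p, q) (p, q') := by
  induction h with
  | refl => exact .refl
  | tail _ hstep ih =>
      exact ih.tail (Or.inr (Or.inl ⟨hstep, rfl, Or.inl rfl, by simp⟩))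

lemma eps_par_proj {iS : LTS S A} {iE : LTS E A} {x y : S × E}
    (h : (iS.par iE).eps x y) : iS.eps x.1 y.1 ∧ iE.eps x.2 y.2 := by
  induction h with
  | refl => exact ⟨.refl, .refl⟩
  | tail _ hstep ih =>
      rcases hstep with ⟨h1, h2, _, _⟩ | ⟨h1, h2, _, _⟩ | ⟨a, _, heq, _⟩
      · exact ⟨ih.1.tail h1, h2 ▸ ih.2⟩
      · exact ⟨h2 ▸ ih.1, ih.2.tail h1⟩
      · cases heq

lemma eps_par_iff (iS : LTS S A) (iE : LTS E A) (p p' : S) (q q' : E) :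
    (iS.par iE).eps (p, q) (p', q') ↔ iS.eps p p' ∧ iE.eps q q' := by
  constructor
  · exact fun h => eps_par_proj h
  · rintro ⟨h1, h2⟩
    exact (eps_par_left iS iE q h1).trans (eps_par_right iS iE p' h2)

lemma quiescent_par_iff {iS : LTS S A} {iE : LTS E A}
    (hc : LTS.Composable iS iE) (his : iS.IOTS) (hie : iE.IOTS)
    (p : S) (q : E) :
    (iS.par iE).quiescent (p, q) ↔ iS.quiescent p ∧ iE.quiescent q := by
  constructor
  · rintro ⟨hout, htau⟩
    have hpt : ∀ p0, ¬ iS.T p none p0 := fun p0 hp0 =>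
      htau (p0, q) (Or.inl ⟨hp0, rfl, Or.inl rfl, by simp⟩)
    have hqt : ∀ q0, ¬ iE.T q none q0 := fun q0 hq0 =>
      htau (p, q0) (Or.inr (Or.inl ⟨hq0, rfl, Or.inl rfl, by simp⟩))
    refine ⟨⟨?_, hpt⟩, ⟨?_, hqt⟩⟩
    · intro x hx p0 hp0
      by_cases hxe : x ∈ iE.L
      · have hxI : x ∈ iE.I := by
          rcases hxe with h | h
          · exact h
          · exact absurd h (Set.disjoint_left.mp hc hx)
        obtain ⟨q', q1, q2, heps, hT, _⟩ := hie q x hxI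
        have hq1 : q1 = q := by
          rcases Relation.ReflTransGen.cases_head heps with h | ⟨c, hc', _⟩
          · exact h.symm
          · exact absurd hc' (hqt c)
        subst hq1
        exact hout x (Or.inl hx) (p0, q2)
          (Or.inr (Or.inr ⟨x, ⟨Or.inr hx, hxe⟩, rfl, hp0, hT⟩))
      · exact hout x (Or.inl hx) (p0, q)
          (Or.inl ⟨hp0, rfl, Or.inr ⟨x, Or.inr hx, rfl⟩,
            fun b hb h => hxe (by injection h with h; exact h ▸ hb)⟩)
    · intro x hx q0 hq0
      by_cases hxs : x ∈ iS.L
      · have hxI : x ∈ iS.I := by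
          rcases hxs with h | h
          · exact h
          · exact absurd hx (Set.disjoint_left.mp hc h)
        obtain ⟨p', p1, p2, heps, hT, _⟩ := his p x hxI
        have hp1 : p1 = p := by
          rcases Relation.ReflTransGen.cases_head heps with h | ⟨c, hc', _⟩
          · exact h.symm
          · exact absurd hc' (hpt c)
        subst hp1
        exact hout x (Or.inr hx) (p2, q0)
          (Or.inr (Or.inr ⟨x, ⟨hxs, Or.inr hx⟩, rfl, hT, hq0⟩))
      · exact hout x (Or.inr hx) (p, q0)
          (Or.inr (Or.inl ⟨hq0, rfl, Or.inr ⟨x, Or.inr hx, rfl⟩,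
            fun b hb h => hxs (by injection h with h; exact h ▸ hb)⟩))
  · rintro ⟨⟨hpo, hpt⟩, ⟨hqo, hqt⟩⟩
    constructor
    · rintro x hx ⟨y1, y2⟩ (⟨h1, _, _, hne⟩ | ⟨h1, _, _, hne⟩ | ⟨b, ⟨hbs, hbe⟩, heq, hTs, hTe⟩)
      · rcases hx with hx | hx
        · exact hpo x hx y1 h1
        · exact hne x (Or.inr hx) rfl
      · rcases hx with hx | hx
        · exact hne x (Or.inr hx) rfl
        · exact hqo x hx y2 h1
      · injection heq with heq; subst heq
        rcases hx with hx | hx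
        · exact hpo x hx y1 hTs
        · exact hqo x hx y2 hTe
    · rintro ⟨y1, y2⟩ (⟨h1, _, _, _⟩ | ⟨h1, _, _, _⟩ | ⟨b, _, heq, _⟩)
      · exact hpt y1 h1
      · exact hqt y2 h1
      · cases heq

lemma wtrans_eps_left {s : LTS S A} {p p1 p' : S} {σ : List (DLabel A)}
    (h : s.eps p p1) (hw : s.wtrans p1 σ p') : s.wtrans p σ p' := by
  cases σ with
  | nil => exact h.trans hw
  | cons ℓ σ =>
      obtain ⟨a, b, h1, h2, h3⟩ := hw
      exact ⟨a, b, h.trans h1, h2, h3⟩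

lemma wtrans_par_aux {iS : LTS S A} {iE : LTS E A}
    (hc : LTS.Composable iS iE) (his : iS.IOTS) (hie : iE.IOTS) :
    ∀ σ : List (DLabel A), (∀ x ∈ σ, x ∈ (iS.par iE).Ld) →
    ∀ (p : S) (q : E) (p' : S) (q' : E),
    (iS.par iE).wtrans (p, q) σ (p', q') ↔
      iS.wtrans p (LTS.proj σ iS.Ld) p' ∧ iE.wtrans q (LTS.proj σ iE.Ld) q' := by
  intro σ
  induction σ with
  | nil =>
      intro _ p q p' q'
      simpa [wtrans, proj] using eps_par_iff iS iE p p' q q'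
  | cons ℓ σ ih =>
      intro hσ p q p' q'
      have hσ' : ∀ x ∈ σ, x ∈ (iS.par iE).Ld :=
        fun x hx => hσ x (List.mem_cons_of_mem _ hx)
      constructor
      · rintro ⟨⟨p1, q1⟩, ⟨p2, q2⟩, heps, hstep, hw⟩
        obtain ⟨hepS, hepE⟩ := eps_par_proj heps
        have hIH := (ih hσ' p2 q2 p' q').mp hw
        cases ℓ with
        | δ =>
            obtain ⟨heq, hqui⟩ := hstep
            obtain ⟨hp12, hq12⟩ := Prod.mk.injEq .. ▸ heq
            subst hp12; subst hq12
            obtain ⟨hqs, hqe⟩ := (quiescent_par_iff hc his hie p1 q1).mp hqui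
            rw [proj_cons_mem delta_mem_Ld, proj_cons_mem delta_mem_Ld]
            exact ⟨⟨p1, p1, hepS, ⟨rfl, hqs⟩, hIH.1⟩,
                   ⟨q1, q1, hepE, ⟨rfl, hqe⟩, hIH.2⟩⟩
        | act a =>
            rcases hstep with ⟨hT, h2, hL, hne⟩ | ⟨hT, h2, hL, hne⟩ |
              ⟨b, ⟨hbs, hbe⟩, heq, hTs, hTe⟩
            · have haS : a ∈ iS.L := by
                rcases hL with h | ⟨b, hb, h⟩
                · cases h
                · injection h with h; exact h ▸ hb
              have haE : a ∉ iE.L := fun h => hne a h rfl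
              rw [proj_cons_mem (act_mem_Ld.mpr haS),
                  proj_cons_not_mem (fun h => haE (act_mem_Ld.mp h))]
              exact ⟨⟨p1, p2, hepS, hT, hIH.1⟩,
                     wtrans_eps_left hepE (h2 ▸ hIH.2)⟩
            · have haE : a ∈ iE.L := by
                rcases hL with h | ⟨b, hb, h⟩
                · cases h
                · injection h with h; exact h ▸ hb
              have haS : a ∉ iS.L := fun h => hne a h rfl
              rw [proj_cons_not_mem (fun h => haS (act_mem_Ld.mp h)),
                  proj_cons_mem (act_mem_Ld.mpr haE)]
              exact ⟨wtrans_eps_left hepS (h2 ▸ hIH.1),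
                     ⟨q1, q2, hepE, hT, hIH.2⟩⟩
            · injection heq with heq; subst heq
              rw [proj_cons_mem (act_mem_Ld.mpr hbs),
                  proj_cons_mem (act_mem_Ld.mpr hbe)]
              exact ⟨⟨p1, p2, hepS, hTs, hIH.1⟩,
                     ⟨q1, q2, hepE, hTe, hIH.2⟩⟩
      · rintro ⟨hws, hwe⟩
        cases ℓ with
        | δ =>
            rw [proj_cons_mem delta_mem_Ld] at hws
            rw [proj_cons_mem delta_mem_Ld] at hwe
            obtain ⟨p1, p2, hepS, ⟨hpe, hqs⟩, hwS⟩ := hws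
            obtain ⟨q1, q2, hepE, ⟨hqe', hqe⟩, hwE⟩ := hwe
            subst hpe; subst hqe'
            exact ⟨(p1, q1), (p1, q1),
              (eps_par_iff iS iE p p1 q q1).mpr ⟨hepS, hepE⟩,
              ⟨rfl, (quiescent_par_iff hc his hie p1 q1).mpr ⟨hqs, hqe⟩⟩,
              (ih hσ' p1 q1 p' q').mpr ⟨hwS, hwE⟩⟩
        | act a =>
            have ha : a ∈ (iS.par iE).L :=
              act_mem_Ld.mp (hσ (DLabel.act a) List.mem_cons_self)
            have haUnion : a ∈ iS.L ∪ iE.L := by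
              rcases ha with (⟨h, _⟩ | ⟨h, _⟩) | (h | h)
              · exact Or.inl (Or.inl h)
              · exact Or.inr (Or.inl h)
              · exact Or.inl (Or.inr h)
              · exact Or.inr (Or.inr h)
            by_cases hs : a ∈ iS.L <;> by_cases heL : a ∈ iE.L
            · rw [proj_cons_mem (act_mem_Ld.mpr hs)] at hws
              rw [proj_cons_mem (act_mem_Ld.mpr heL)] at hwe
              obtain ⟨p1, p2, hepS, hTs, hwS⟩ := hws
              obtain ⟨q1, q2, hepE, hTe, hwE⟩ := hwe
              exact ⟨(p1, q1), (p2, q2),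
                (eps_par_iff iS iE p p1 q q1).mpr ⟨hepS, hepE⟩,
                Or.inr (Or.inr ⟨a, ⟨hs, heL⟩, rfl, hTs, hTe⟩),
                (ih hσ' p2 q2 p' q').mpr ⟨hwS, hwE⟩⟩
            · rw [proj_cons_mem (act_mem_Ld.mpr hs)] at hws
              rw [proj_cons_not_mem (fun h => heL (act_mem_Ld.mp h))] at hwe
              obtain ⟨p1, p2, hepS, hTs, hwS⟩ := hws
              exact ⟨(p1, q), (p2, q),
                (eps_par_iff iS iE p p1 q q).mpr ⟨hepS, .refl⟩,
                Or.inl ⟨hTs, rfl, Or.inr ⟨a, hs, rfl⟩,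
                  fun b hb h => heL (by injection h with h; exact h ▸ hb)⟩,
                (ih hσ' p2 q p' q').mpr ⟨hwS, hwe⟩⟩
            · rw [proj_cons_not_mem (fun h => hs (act_mem_Ld.mp h))] at hws
              rw [proj_cons_mem (act_mem_Ld.mpr heL)] at hwe
              obtain ⟨q1, q2, hepE, hTe, hwE⟩ := hwe
              exact ⟨(p, q1), (p, q2),
                (eps_par_iff iS iE p p q q1).mpr ⟨.refl, hepE⟩,
                Or.inr (Or.inl ⟨hTe, rfl, Or.inr ⟨a, heL, rfl⟩,
                  fun b hb h => hs (by injection h with h; exact h ▸ hb)⟩),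
                (ih hσ' p q2 p' q').mpr ⟨hws, hwE⟩⟩
            · rcases haUnion with h | h
              · exact absurd h hs
              · exact absurd h heL

end LTS

/-- for composable input-enabled systems, a weak transition of the
composition corresponds exactly to weak transitions of the components along the
projected traces. -/
theorem wtrans_par_iff_of_IOTS {S E A : Type} (iS : LTS S A) (iE : LTS E A)
    (hs : iS.WF) (he : iE.WF) (hc : LTS.Composable iS iE)
    (his : iS.IOTS) (hie : iE.IOTS)
    (iS' : S) (iE' : E) (σ : List (DLabel A))
    (hσ : ∀ x ∈ σ, x ∈ (iS.par iE).Ld) :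
    (iS.par iE).wtrans (iS.par iE).q0 σ (iS', iE') ↔
      iS.wtrans iS.q0 (LTS.proj σ iS.Ld) iS' ∧
        iE.wtrans iE.q0 (LTS.proj σ iE.Ld) iE' := by
  have h := LTS.wtrans_par_aux hc his hie σ hσ iS.q0 iE.q0 iS' iE'
  exact h
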